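/- Let x, y, z be positive real numbers and define P := x²y²z² + x²yz² + 2x²yz + x²y + 2xy + y + 1, Q := x²y²z² + x²y²z + 2xy²z + y²z + 2yz + z + 1, R := x²y²z² + xy²z² + 2xyz² + xz² + 2xz + x + 1, and set X := P²/(xQ²), Y := Q²/(yR²), Z := R²/(zP²). Then, with ⟨a,b⟩ := √(ab)·(1 + 1/a + 1/(ab)) for a, b > 0, one has ⟨X,Y⟩ = ⟨x,y⟩, ⟨Y,Z⟩ = ⟨y,z⟩, and ⟨Z,X⟩ = ⟨z,x⟩. (The explicit birational Weyl reflection s₁* on the 𝒜₃-quiver preserves the elementary formal geodesic functions; see Theorem 4.2.2 and the remark following it.) -/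

import Mathlib

/-- The elementary formal geodesic function of the `𝒜₃`-quiver:
`⟨a,b⟩ = √(ab)·(1 + 1/a + 1/(a*b))`. -/
noncomputable def brkt (a b : ℝ) : ℝ := Real.sqrt (a * b) * (1 + 1 / a + 1 / (a * b))

private lemma brkt_key (a b p q r : ℝ) (ha : 0 < a) (hb : 0 < b)
    (hp : 0 < p) (hq : 0 < q) (hr : 0 < r)
    (hid : p^2 + a*q^2 + a*b*r^2 = (a*b + b + 1)*p*r) :
    brkt (p^2/(a*q^2)) (q^2/(b*r^2)) = brkt a b := by
  set s := Real.sqrt (a*b) with hsdef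
  have hs2 : s^2 = a*b := Real.sq_sqrt (by positivity)
  have hspos : 0 < s := Real.sqrt_pos.2 (by positivity)
  have hXY : (p^2/(a*q^2)) * (q^2/(b*r^2)) = (p/(r*s))^2 := by
    field_simp
    linear_combination hs2
  have hRHS : brkt a b = (a*b + b + 1)/s := by
    unfold brkt
    rw [← hsdef]
    field_simp
    linear_combination hs2
  have hLHS : brkt (p^2/(a*q^2)) (q^2/(b*r^2)) = (a*b + b + 1)/s := by
    unfold brkt
    rw [hXY, Real.sqrt_sq (by positivity : (0:ℝ) ≤ p/(r*s))]
    field_simp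
    linear_combination hid + r^2*hs2
  rw [hLHS, hRHS]

/-- The explicit birational Weyl reflection `s₁*` on the `𝒜₃`-quiver preserves the
elementary formal geodesic functions (Theorem 4.2.2 and the remark following it). -/
theorem stmt_11 (x y z : ℝ) (hx : 0 < x) (hy : 0 < y) (hz : 0 < z) :
    let P := x^2*y^2*z^2 + x^2*y*z^2 + 2*x^2*y*z + x^2*y + 2*x*y + y + 1
    let Q := x^2*y^2*z^2 + x^2*y^2*z + 2*x*y^2*z + y^2*z + 2*y*z + z + 1
    let R := x^2*y^2*z^2 + x*y^2*z^2 + 2*x*y*z^2 + x*z^2 + 2*x*z + x + 1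
    let X := P^2 / (x * Q^2)
    let Y := Q^2 / (y * R^2)
    let Z := R^2 / (z * P^2)
    brkt X Y = brkt x y ∧ brkt Y Z = brkt y z ∧ brkt Z X = brkt z x := by
  intro P Q R X Y Z
  have hP : 0 < P := by positivity
  have hQ : 0 < Q := by positivity
  have hR : 0 < R := by positivity
  refine ⟨?_, ?_, ?_⟩
  · have := brkt_key x y P Q R hx hy hP hQ hR (by unfold P Q R; ring)
    simpa [X, Y, mul_comm] using this
  · have := brkt_key y z Q R P hy hz hQ hR hP (by unfold P Q R; ring)
    simpa [Y, Z, mul_comm] using this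
  · have := brkt_key z x R P Q hz hx hR hP hQ (by unfold P Q R; ring)
    simpa [Z, X, mul_comm] using this
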